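/- A nonnegative binary form is a sum of squares: if p ∈ ℝ[x,y] is homogeneous of degree 2d and p(x,y) ≥ 0 for all (x,y) ∈ ℝ², then p can be written as a sum of (at most two) squares of polynomials in ℝ[x,y]. -/

import Mathlib

section UnivariateSOS
open Polynomial

lemma univ_sos (n : ℕ) : ∀ f : Polynomial ℝ, f.natDegree ≤ n → (∀ t : ℝ, 0 ≤ f.eval t) →
    ∃ a b : Polynomial ℝ, f = a ^ 2 + b ^ 2 ∧
      2 * a.natDegree ≤ f.natDegree ∧ 2 * b.natDegree ≤ f.natDegree := by
  induction n using Nat.strong_induction_on with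
  | _ n IH =>
  intro f hdeg hf
  rcases Nat.eq_zero_or_pos f.natDegree with h0 | hpos
  · -- constant case
    have hc : f = C (f.coeff 0) := eq_C_of_natDegree_eq_zero h0
    have hc0 : 0 ≤ f.coeff 0 := by have := hf 0; rwa [hc, eval_C] at this
    refine ⟨C (Real.sqrt (f.coeff 0)), 0, ?_, by simp [h0], by simp⟩
    rw [← C_pow, Real.sq_sqrt hc0]
    simpa using hc
  · have hf0 : f ≠ 0 := fun h => by simp [h] at hpos
    by_cases hroot : ∃ r : ℝ, f.eval r = 0
    · obtain ⟨r, hr⟩ := hroot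
      obtain ⟨g, hg⟩ := (dvd_iff_isRoot.mpr hr)
      have hderiv : eval r (derivative f) = 0 := by
        have hmin : IsLocalMin (fun t : ℝ => f.eval t) r := by
          apply Filter.Eventually.of_forall
          intro t
          show f.eval r ≤ f.eval t
          rw [hr]; exact hf t
        have := hmin.deriv_eq_zero
        rwa [Polynomial.deriv] at this
      have hgr : g.eval r = 0 := by
        rw [hg, derivative_mul, derivative_X_sub_C] at hderiv
        simpa using hderiv
      obtain ⟨h, hh⟩ := (dvd_iff_isRoot.mpr hgr)
      have hfh : f = (X - C r) ^ 2 * h := by rw [hg, hh]; ring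
      have hhne : h ≠ 0 := fun hz => hf0 (by rw [hfh, hz, mul_zero])
      have hdf : f.natDegree = 2 + h.natDegree := by
        rw [hfh, natDegree_mul (pow_ne_zero 2 (X_sub_C_ne_zero r)) hhne, natDegree_pow, natDegree_X_sub_C]
      have hhnn : ∀ t : ℝ, 0 ≤ h.eval t := by
        intro t
        rcases eq_or_ne t r with rfl | htr
        · have hcont : Filter.Tendsto (fun s => h.eval s) (nhdsWithin t {t}ᶜ) (nhds (h.eval t)) :=
            (h.continuous_aeval).continuousAt.continuousWithinAt
          refine ge_of_tendsto hcont ?_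
          filter_upwards [self_mem_nhdsWithin] with s hs
          have hfs := hf s
          rw [hfh] at hfs
          simp only [eval_mul, eval_pow, eval_sub, eval_X, eval_C] at hfs
          have hsp : (0:ℝ) < (s - t) ^ 2 := by
            have : s - t ≠ 0 := sub_ne_zero.mpr hs
            positivity
          nlinarith [hfs, hsp]
        · have hfs := hf t
          rw [hfh] at hfs
          simp only [eval_mul, eval_pow, eval_sub, eval_X, eval_C] at hfs
          have hsp : (0:ℝ) < (t - r) ^ 2 := by
            have : t - r ≠ 0 := sub_ne_zero.mpr htr
            positivity
          nlinarith [hfs, hsp]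
      obtain ⟨a, b, hab, ha, hb⟩ := IH h.natDegree (by omega) h le_rfl hhnn
      refine ⟨(X - C r) * a, (X - C r) * b, by rw [hfh, hab]; ring, ?_, ?_⟩
      · have h1 := natDegree_mul_le (p := X - C r) (q := a)
        rw [natDegree_X_sub_C] at h1
        omega
      · have h1 := natDegree_mul_le (p := X - C r) (q := b)
        rw [natDegree_X_sub_C] at h1
        omega
    · push_neg at hroot
      have hdegpos : 0 < (f.map (algebraMap ℝ ℂ)).degree := by
        rw [degree_map]
        exact natDegree_pos_iff_degree_pos.mp hpos
      obtain ⟨z, hz⟩ := Complex.exists_root hdegpos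
      set α := z.re with hα
      set β := z.im with hβ
      have hzconj : (f.map (algebraMap ℝ ℂ)).IsRoot ((starRingEnd ℂ) z) := by
        have h1 : (starRingEnd ℂ) ((f.map (algebraMap ℝ ℂ)).eval z) = 0 := by rw [hz]; simp
        rw [eval_map, Polynomial.hom_eval₂] at h1
        have hcomp : ((starRingEnd ℂ)).comp (algebraMap ℝ ℂ) = algebraMap ℝ ℂ := by
          ext x; simp
        rw [hcomp] at h1
        rw [IsRoot, eval_map]
        exact h1
      have hβ0 : β ≠ 0 := by
        intro hb0
        have hzre : z = (algebraMap ℝ ℂ) α := by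
          apply Complex.ext
          · simp [hα, Complex.coe_algebraMap]
          · have h4 : z.im = 0 := hβ ▸ hb0
            simp [h4, Complex.coe_algebraMap]
        apply hroot α
        have h2 := hz
        rw [hzre, IsRoot, eval_map, Polynomial.eval₂_at_apply] at h2
        have h3 : ((f.eval α : ℝ) : ℂ) = 0 := h2
        exact_mod_cast h3
      have hzne : z ≠ (starRingEnd ℂ) z := by
        intro h
        apply hβ0
        have h2 := congrArg Complex.im h
        simp only [Complex.conj_im] at h2
        rw [hβ]; linarith
      set q : Polynomial ℝ := (X - C α) ^ 2 + C (β ^ 2) with hq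
      have hqmap : q.map (algebraMap ℝ ℂ) = (X - C z) * (X - C ((starRingEnd ℂ) z)) := by
        have h1 : z + (starRingEnd ℂ) z = 2 * (α : ℂ) := by
          rw [Complex.add_conj]; push_cast; ring
        have h2 : z * (starRingEnd ℂ) z = (α : ℂ) ^ 2 + (β : ℂ) ^ 2 := by
          rw [Complex.mul_conj]
          push_cast [Complex.normSq_apply]
          ring
        have expand : (X - C z) * (X - C ((starRingEnd ℂ) z)) =
            X ^ 2 - C (z + (starRingEnd ℂ) z) * X + C (z * (starRingEnd ℂ) z) := by
          simp only [map_add, map_mul]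
          ring
        rw [expand, h1, h2, hq]
        simp only [Polynomial.map_add, Polynomial.map_pow, Polynomial.map_sub,
          Polynomial.map_X, Polynomial.map_C, Complex.coe_algebraMap]
        push_cast
        simp only [map_add, map_mul, map_pow, map_ofNat]
        ring
      have hqmonic : q.Monic := by
        apply Polynomial.Monic.add_of_left ((monic_X_sub_C α).pow 2)
        have hdeg2 : ((X - C α) ^ 2).degree = 2 := by
          rw [degree_pow, degree_X_sub_C]; rfl
        rw [hdeg2]
        exact lt_of_le_of_lt (degree_C_le) (by norm_num)
      have hcop : IsCoprime (X - C z) (X - C ((starRingEnd ℂ) z)) := by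
        refine ⟨C (((starRingEnd ℂ) z - z)⁻¹), -C (((starRingEnd ℂ) z - z)⁻¹), ?_⟩
        have hne : (starRingEnd ℂ) z - z ≠ 0 := sub_ne_zero.mpr (Ne.symm hzne)
        have e1 : C (((starRingEnd ℂ) z - z)⁻¹) * (X - C z) +
            -C (((starRingEnd ℂ) z - z)⁻¹) * (X - C ((starRingEnd ℂ) z)) =
            C (((starRingEnd ℂ) z - z)⁻¹) * (C ((starRingEnd ℂ) z) - C z) := by ring
        rw [e1, ← C_sub, ← C_mul, inv_mul_cancel₀ hne, C_1]
      have hdvd : q ∣ f := by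
        rw [← Polynomial.map_dvd_map (algebraMap ℝ ℂ) (algebraMap ℝ ℂ).injective hqmonic,
          hqmap]
        exact IsCoprime.mul_dvd hcop (dvd_iff_isRoot.mpr hz) (dvd_iff_isRoot.mpr hzconj)
      obtain ⟨h, hh⟩ := hdvd
      have hhne : h ≠ 0 := fun hzr => hf0 (by rw [hh, hzr, mul_zero])
      have hqpos : ∀ t : ℝ, 0 < q.eval t := by
        intro t
        simp only [hq, eval_add, eval_pow, eval_sub, eval_X, eval_C]
        positivity
      have hhnn : ∀ t : ℝ, 0 ≤ h.eval t := by
        intro t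
        have h2 := hf t
        rw [hh, eval_mul] at h2
        exact nonneg_of_mul_nonneg_right h2 (hqpos t)
      have hqdeg : q.natDegree = 2 := by
        have hdeg2 : ((X - C α) ^ 2).degree = 2 := by rw [degree_pow, degree_X_sub_C]; rfl
        have hdq : q.degree = 2 := by
          rw [hq, degree_add_eq_left_of_degree_lt, hdeg2]
          rw [hdeg2]
          exact lt_of_le_of_lt (degree_C_le) (by norm_num)
        exact natDegree_eq_of_degree_eq_some hdq
      have hdf : f.natDegree = 2 + h.natDegree := by
        rw [hh, natDegree_mul (hqmonic.ne_zero) hhne, hqdeg]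
      obtain ⟨a, b, hab, ha, hb⟩ := IH h.natDegree (by omega) h le_rfl hhnn
      refine ⟨(X - C α) * a - C β * b, (X - C α) * b + C β * a, ?_, ?_, ?_⟩
      · rw [hh, hab, hq, C_pow]
        ring
      · have h1 := natDegree_mul_le (p := X - C α) (q := a)
        rw [natDegree_X_sub_C] at h1
        have h2 : (C β * b).natDegree ≤ b.natDegree := by
          simpa using natDegree_mul_le (p := C β) (q := b)
        have h3 := natDegree_sub_le ((X - C α) * a) (C β * b)
        omega
      · have h1 := natDegree_mul_le (p := X - C α) (q := b)
        rw [natDegree_X_sub_C] at h1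
        have h2 : (C β * a).natDegree ≤ a.natDegree := by
          simpa using natDegree_mul_le (p := C β) (q := a)
        have h3 := natDegree_add_le ((X - C α) * b) (C β * a)
        omega
end UnivariateSOS


open MvPolynomial

-- scaling of a homogeneous polynomial
lemma homog_eval_smul {p : MvPolynomial (Fin 2) ℝ} {n : ℕ} (hp : p.IsHomogeneous n)
    (c : ℝ) (v : Fin 2 → ℝ) : eval (c • v) p = c ^ n * eval v p := by
  rw [eval_eq', eval_eq', Finset.mul_sum]
  apply Finset.sum_congr rfl
  intro d hd
  have hdeg : d.degree = n := by
    have h1 := hp (MvPolynomial.mem_support_iff.mp hd)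
    rw [Finsupp.degree_eq_weight_one]
    exact h1
  have hsum : ∑ i : Fin 2, d i = n := by
    rw [← hdeg, Finsupp.degree]
    apply (Finset.sum_subset (Finset.subset_univ d.support) ?_).symm
    intro i _ hi
    exact Finsupp.notMem_support_iff.mp hi
  have : ∏ i : Fin 2, (c • v) i ^ d i = c ^ n * ∏ i : Fin 2, v i ^ d i := by
    simp only [Pi.smul_apply, smul_eq_mul, mul_pow]
    rw [Finset.prod_mul_distrib, Finset.prod_pow_eq_pow_sum, hsum]
  rw [this]; ring

-- evaluation of the dehomogenization
lemma eval_dehom (t : ℝ) (p : MvPolynomial (Fin 2) ℝ) :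
    Polynomial.eval t (MvPolynomial.aeval ![Polynomial.X, (1 : Polynomial ℝ)] p)
      = eval ![t, 1] p := by
  induction p using MvPolynomial.induction_on with
  | C a => simp
  | add p q hp hq => simp [hp, hq]
  | mul_X p i hp =>
    fin_cases i <;> simp [hp]

-- degree bound on dehomogenization
lemma natDegree_dehom_le (p : MvPolynomial (Fin 2) ℝ) (n : ℕ) (hp : p.IsHomogeneous n) :
    (MvPolynomial.aeval ![Polynomial.X, (1 : Polynomial ℝ)] p).natDegree ≤ n := by
  conv_lhs => rw [← MvPolynomial.support_sum_monomial_coeff p]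
  rw [map_sum]
  apply Polynomial.natDegree_sum_le_of_forall_le
  intro d hd
  rw [MvPolynomial.aeval_monomial]
  have hdeg : d.degree = n := by
    have h1 := hp (MvPolynomial.mem_support_iff.mp hd)
    rw [Finsupp.degree_eq_weight_one]; exact h1
  apply le_trans (Polynomial.natDegree_mul_le)
  have h2 : (Finsupp.prod d fun i k => (![Polynomial.X, (1 : Polynomial ℝ)]) i ^ k).natDegree
      ≤ n := by
    rw [Finsupp.prod]
    apply le_trans (Polynomial.natDegree_prod_le _ _)
    calc ∑ i ∈ d.support, ((![Polynomial.X, (1 : Polynomial ℝ)]) i ^ d i).natDegree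
        ≤ ∑ i ∈ d.support, d i := by
          apply Finset.sum_le_sum
          intro i _
          fin_cases i <;> simp
      _ = n := hdeg
  simpa using h2
open MvPolynomial

noncomputable def homog (a : Polynomial ℝ) (m : ℕ) : MvPolynomial (Fin 2) ℝ :=
  ∑ i ∈ Finset.range (m + 1), MvPolynomial.C (a.coeff i) * (X 0) ^ i * (X 1) ^ (m - i)

lemma eval_homog (a : Polynomial ℝ) (m : ℕ) (ha : a.natDegree ≤ m) (x y : ℝ) (hy : y ≠ 0) :
    eval ![x, y] (homog a m) = y ^ m * a.eval (x / y) := by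
  rw [homog, map_sum, Polynomial.eval_eq_sum_range' (Nat.lt_succ_of_le ha), Finset.mul_sum]
  apply Finset.sum_congr rfl
  intro i hi
  rw [Finset.mem_range] at hi
  have hile : i ≤ m := Nat.lt_succ_iff.mp hi
  have hpow : y ^ (m - i) * y ^ i = y ^ m := by
    rw [← pow_add, Nat.sub_add_cancel hile]
  simp only [map_mul, map_pow, MvPolynomial.eval_C, MvPolynomial.eval_X]
  have h0 : (![x, y] : Fin 2 → ℝ) 0 = x := rfl
  have h1 : (![x, y] : Fin 2 → ℝ) 1 = y := rfl
  rw [h0, h1, div_pow]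
  field_simp
  rw [mul_comm (a.coeff i) (x ^ i), ← hpow]
  ring

theorem nonneg_binary_form_is_sum_two_squares (d : ℕ)
    (p : MvPolynomial (Fin 2) ℝ) (hp : p.IsHomogeneous (2 * d))
    (hnonneg : ∀ v : Fin 2 → ℝ, 0 ≤ eval v p) :
    ∃ q1 q2 : MvPolynomial (Fin 2) ℝ, p = q1 ^ 2 + q2 ^ 2 := by
  set f : Polynomial ℝ := MvPolynomial.aeval ![Polynomial.X, 1] p with hfdef
  have hfeval : ∀ t, Polynomial.eval t f = eval ![t, 1] p := fun t => eval_dehom t p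
  have hfnn : ∀ t, 0 ≤ f.eval t := fun t => (hfeval t) ▸ hnonneg ![t, 1]
  have hfdeg : f.natDegree ≤ 2 * d := natDegree_dehom_le p _ hp
  obtain ⟨a, b, hab, ha, hb⟩ := univ_sos f.natDegree f le_rfl hfnn
  have had : a.natDegree ≤ d := by omega
  have hbd : b.natDegree ≤ d := by omega
  refine ⟨homog a d, homog b d, ?_⟩
  have key : X 1 * p = X 1 * ((homog a d) ^ 2 + (homog b d) ^ 2) := by
    apply MvPolynomial.funext
    intro v
    by_cases hy : v 1 = 0
    · simp [hy]
    · have hv : v = ![v 0, v 1] := by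
        funext i; fin_cases i <;> rfl
      set x := v 0 with hx
      set y := v 1 with hyy
      have hsm : (y • ![x / y, 1] : Fin 2 → ℝ) = ![x, y] := by
        funext i; fin_cases i
        · show y * (x / y) = x; field_simp
        · show y * 1 = y; ring
      have hpv : eval ![x, y] p = y ^ (2 * d) * Polynomial.eval (x / y) f := by
        rw [hfeval, ← homog_eval_smul hp y ![x / y, 1], hsm]
      have h1 : eval ![x, y] (homog a d) = y ^ d * a.eval (x / y) := eval_homog a d had x y hy
      have h2 : eval ![x, y] (homog b d) = y ^ d * b.eval (x / y) := eval_homog b d hbd x y hy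
      rw [hv, map_mul, map_mul, map_add, map_pow, map_pow, h1, h2, hpv, hab]
      have hX1 : eval ![x, y] (X 1 : MvPolynomial (Fin 2) ℝ) = y := by simp
      rw [hX1]
      simp only [Polynomial.eval_add, Polynomial.eval_pow]
      rw [pow_mul]
      ring
  have hX : (X 1 : MvPolynomial (Fin 2) ℝ) ≠ 0 := MvPolynomial.X_ne_zero 1
  exact mul_left_cancel₀ hX key
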